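/- Define iter : List Bool → ℕ → ((ℕ → Bool) → Bool) by iter [] _ = (fun _ => false), iter (false :: ℓ) i = (fun a => a i && iter ℓ (i-1) a), iter (true :: ℓ) i = (fun a => a i || iter ℓ (i-1) a). If ℓ is the n-bit binary representation of k (most significant bit first, 0 ≤ k < 2^n), then the formula iter ℓ n, viewed as a function of the variables x_1,...,x_n, has exactly k satisfying assignments among the 2^n assignments to those variables. -/

import Mathlib

def iter : List Bool → ℕ → (ℕ → Bool) → Bool
  | [], _ => fun _ => false
  | (false :: l), i => fun a => a i && iter l (i - 1) a
  | (true :: l), i => fun a => a i || iter l (i - 1) a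

lemma iter_congr (ℓ : List Bool) (i : ℕ) (a a' : ℕ → Bool)
    (h : ∀ j ≤ i, a j = a' j) : iter ℓ i a = iter ℓ i a' := by
  induction ℓ generalizing i with
  | nil => simp [iter]
  | cons b l ih =>
    have h1 : a i = a' i := h i le_rfl
    have h2 : iter l (i-1) a = iter l (i-1) a' :=
      ih _ fun j hj => h j (le_trans hj (Nat.sub_le i 1))
    cases b <;> simp [iter, h1, h2]

lemma foldl_shift (ℓ : List Bool) (c : ℕ) :
    ℓ.foldl (fun acc b => 2 * acc + b.toNat) c
      = c * 2 ^ ℓ.length + ℓ.foldl (fun acc b => 2 * acc + b.toNat) 0 := by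
  induction ℓ generalizing c with
  | nil => simp
  | cons b l ih =>
    simp only [List.foldl_cons, List.length_cons]
    rw [ih, ih (2 * 0 + b.toNat)]
    cases b <;> simp [pow_succ] <;> ring

lemma foldl_lt (ℓ : List Bool) :
    ℓ.foldl (fun acc b => 2 * acc + b.toNat) 0 < 2 ^ ℓ.length := by
  induction ℓ with
  | nil => simp
  | cons b l ih =>
    simp only [List.foldl_cons, List.length_cons]
    rw [foldl_shift]
    cases b <;> simp [pow_succ] <;> omega

def snocBoolEquiv (m : ℕ) : (Fin m → Bool) × Bool ≃ (Fin (m+1) → Bool) where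
  toFun x := Fin.snoc x.1 x.2
  invFun a := (fun i => a i.castSucc, a (Fin.last m))
  left_inv x := by simp
  right_inv a := by
    funext i
    induction i using Fin.lastCases <;> simp

theorem iter_count (n k : ℕ) (ℓ : List Bool)
    (hlen : ℓ.length = n) (hk : k < 2 ^ n)
    (hrep : ℓ.foldl (fun acc b => 2 * acc + b.toNat) 0 = k) :
    (Finset.univ.filter fun a : Fin n → Bool =>
        iter ℓ n (fun i => if h : 1 ≤ i ∧ i ≤ n then a ⟨i - 1, by omega⟩ else false)
          = true).card = k := by
  induction ℓ generalizing n k with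
  | nil =>
    subst hlen
    simp at hk
    simp at hrep
    simp [iter, ← hrep]
  | cons c l ih =>
    subst hlen
    simp only [List.length_cons]
    set m := l.length with hm
    set v := l.foldl (fun acc b => 2 * acc + b.toNat) 0 with hv
    have hk' : v < 2 ^ m := foldl_lt l
    have hkeq : k = c.toNat * 2 ^ m + v := by
      rw [← hrep]; simp only [List.foldl_cons]
      rw [foldl_shift]; simp; rfl
    have key : ∀ (a : Fin m → Bool) (b : Bool),
        (iter (c :: l) (m+1)
          (fun i => if h : 1 ≤ i ∧ i ≤ m+1 then (Fin.snoc a b : Fin (m+1) → Bool) ⟨i - 1, by omega⟩ else false))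
        = (if c then (b || iter l m (fun i => if h : 1 ≤ i ∧ i ≤ m then a ⟨i - 1, by omega⟩ else false))
           else (b && iter l m (fun i => if h : 1 ≤ i ∧ i ≤ m then a ⟨i - 1, by omega⟩ else false))) := by
      intro a b
      have hcongr : iter l m
          (fun i => if h : 1 ≤ i ∧ i ≤ m+1 then (Fin.snoc a b : Fin (m+1) → Bool) ⟨i - 1, by omega⟩ else false)
        = iter l m (fun i => if h : 1 ≤ i ∧ i ≤ m then a ⟨i - 1, by omega⟩ else false) := by
        apply iter_congr
        intro j hj
        by_cases h1 : 1 ≤ j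
        · rw [dif_pos ⟨h1, by omega⟩, dif_pos ⟨h1, hj⟩]
          have : (⟨j - 1, by omega⟩ : Fin (m+1)) = Fin.castSucc ⟨j - 1, by omega⟩ := rfl
          rw [this, Fin.snoc_castSucc]
        · rw [dif_neg (by omega), dif_neg (by omega)]
      have hhead : (if h : 1 ≤ m+1 ∧ m+1 ≤ m+1 then (Fin.snoc a b : Fin (m+1) → Bool) ⟨m, by omega⟩ else false) = b := by
        rw [dif_pos ⟨by omega, le_rfl⟩]
        have : (⟨m, by omega⟩ : Fin (m+1)) = Fin.last m := rfl
        rw [this, Fin.snoc_last]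
      cases c <;>
        · show _ = _
          simp only [iter, Nat.add_sub_cancel]
          rw [hhead, hcongr]
          simp
    rw [Finset.card_filter]
    rw [← Equiv.sum_comp (snocBoolEquiv m)]
    simp only [snocBoolEquiv, Equiv.coe_fn_mk]
    rw [Fintype.sum_prod_type]
    simp only [← hm]
    simp only [key]
    cases c
    · simp only [Bool.false_eq_true, if_false, Fintype.sum_bool, Bool.true_and, Bool.false_and]
      simp only [if_neg (by simp : ¬ (false = true)), add_zero]
      rw [hkeq]
      simp only [Bool.toNat_false, zero_mul, zero_add]
      rw [← Finset.card_filter]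
      exact ih m v rfl hk' rfl
    · simp only [Fintype.sum_bool, Bool.true_or, Bool.false_or, ite_true, if_pos rfl]
      rw [Finset.sum_add_distrib, ← Finset.card_filter]
      have IH := ih m v rfl hk' rfl
      rw [IH, hkeq]
      simp [Finset.card_univ]
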